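/- Soundness of the sumcheck protocol: for any (possibly dishonest) deterministic prover function, any polynomial p with vars p ⊆ set vs for a duplicate-free variable list vs, deg p ≤ d, and nonempty H, the probability over uniformly random tuples rs ∈ F^(length vs) that the sumcheck verifier accepts while v ≠ ∑_{σ : set vs → H} eval p σ is at most d · (length vs) / |F|. -/

import Mathlib

open MvPolynomial

/-- Partially evaluate `p` under a partial substitution `σ`. -/
noncomputable def inst {V R : Type*} [CommRing R]
    (p : MvPolynomial V R) (σ : V → Option R) : MvPolynomial V R :=
  aeval (fun x => (σ x).elim (X x) C) p

/-- Evaluate `p` fully, using `σ` where defined and `0` as a default elsewhere. -/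
noncomputable def evalSubst {V R : Type*} [CommRing R]
    (p : MvPolynomial V R) (σ : V → Option R) : R :=
  eval (fun x => (σ x).getD 0) p

/-- `ρ` overridden by `σ` (with `σ` taking priority on its domain). -/
def override {V R : Type*} (ρ σ : V → Option R) : V → Option R :=
  fun x => (σ x).elim (ρ x) some

/-- The partial substitution with domain `W` determined by a function `f : W → H`. -/
def toSubst {V R : Type*} [DecidableEq V] (W : Finset V) (H : Finset R)
    (f : ↥W → ↥H) : V → Option R :=
  fun x => if h : x ∈ W then some ((f ⟨x, h⟩ : ↥H) : R) else none

/-- The singleton substitution `[x ↦ r]`. -/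
def single {V R : Type*} [DecidableEq V] (x : V) (r : R) : V → Option R :=
  fun y => if y = x then some r else none

/-- A (possibly dishonest) deterministic prover: given the current sumcheck instance
`(H, p, v)`, the current variable, the remaining variables, the last randomness, and
its state, it returns a claimed univariate polynomial and a new state. -/
abbrev Prover (V F S : Type*) [CommRing F] : Type _ :=
  (Finset F × MvPolynomial V F × F) → V → List V → F → S → MvPolynomial V F × S

/-- The recursively defined sumcheck interaction: returns the verifier's verdict. -/
noncomputable def sumcheck {V F S : Type*} [CommRing F] [DecidableEq V]
    (pr : Prover V F S) :
    S → Finset F → MvPolynomial V F → F → F → List (V × F) → Prop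
  | s, _H, p, v, _r, [] => v = evalSubst p (fun _ => none)
  | s, H, p, v, r, (x, r') :: rm =>
      let res := pr (H, p, v) x (rm.map Prod.fst) r s
      (↑res.1.vars : Set V) ⊆ {x} ∧
      res.1.totalDegree ≤ p.totalDegree ∧
      v = ∑ h ∈ H, evalSubst res.1 (single x h) ∧
      sumcheck pr res.2 H (inst p (single x r')) (evalSubst res.1 (single x r')) r' rm

/-- The honest prover of the sumcheck protocol. -/
noncomputable def honestProver {V F : Type*} [CommRing F] [DecidableEq V] :
    Prover V F Unit :=
  fun I x xs _ _ => (∑ f : (↥xs.toFinset → ↥I.1), inst I.2.1 (toSubst xs.toFinset I.1 f), ())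

/-! ### Auxiliary lemmas -/

lemma eval_eq_aeval' {V R : Type*} [CommRing R] (g : V → R) (q : MvPolynomial V R) :
    eval g q = aeval g q := by rw [aeval_def, eval]; rfl

lemma evalSubst_inst {V R : Type*} [CommRing R] (p : MvPolynomial V R)
    (σ τ : V → Option R) : evalSubst (inst p σ) τ = evalSubst p (override τ σ) := by
  unfold evalSubst inst override
  rw [eval_eq_aeval', eval_eq_aeval', comp_aeval_apply]
  have hf : (fun i => (aeval fun x => (τ x).getD 0) ((σ i).elim (X i) (C : R → MvPolynomial V R)))
      = fun x => ((σ x).elim (τ x) some).getD 0 := by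
    funext y
    cases h : σ y with
    | none => simp [h]
    | some c => simp [h]
  rw [hf]

lemma vars_inst {V R : Type*} [CommRing R] [Nontrivial R] [DecidableEq V]
    (p : MvPolynomial V R) (σ : V → Option R) :
    ∀ y ∈ (inst p σ).vars, y ∈ p.vars ∧ σ y = none := by
  intro y hy
  have h := vars_bind₁ (fun x => (σ x).elim (X x) (C : R → MvPolynomial V R)) p hy
  rw [Finset.mem_biUnion] at h
  obtain ⟨i, hi, hyi⟩ := h
  cases h' : σ i with
  | none => simp only [h', Option.elim, vars_X, Finset.mem_singleton] at hyi
            subst hyi; exact ⟨hi, h'⟩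
  | some c => simp [h', Option.elim, vars_C] at hyi

lemma totalDegree_inst {V R : Type*} [CommRing R] [Nontrivial R] [DecidableEq V]
    (p : MvPolynomial V R) (σ : V → Option R) :
    (inst p σ).totalDegree ≤ p.totalDegree := by
  unfold inst
  conv_lhs => rw [p.as_sum, map_sum]
  apply totalDegree_finsetSum_le
  intro u hu
  rw [aeval_monomial]
  refine (totalDegree_mul _ _).trans ?_
  have h1 : (algebraMap R (MvPolynomial V R) (coeff u p)).totalDegree = 0 := totalDegree_C _
  rw [h1, zero_add]
  rw [Finsupp.prod]
  refine (totalDegree_finset_prod _ _).trans ?_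
  refine le_trans ?_ (le_totalDegree hu)
  rw [Finsupp.sum]
  apply Finset.sum_le_sum
  intro i hi
  refine (totalDegree_pow _ _).trans ?_
  cases h' : σ i with
  | none => simp [h', totalDegree_X]
  | some c => simp [h', totalDegree_C]

/-- The univariate polynomial obtained by sending every variable to `X`. -/
noncomputable def toUni {V R : Type*} [CommRing R] (q : MvPolynomial V R) : Polynomial R :=
  MvPolynomial.aeval (fun _ : V => Polynomial.X) q

lemma natDegree_toUni {V R : Type*} [CommRing R] [Nontrivial R] (q : MvPolynomial V R) :
    (toUni q).natDegree ≤ q.totalDegree := by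
  unfold toUni
  conv_lhs => rw [q.as_sum, map_sum]
  apply Polynomial.natDegree_sum_le_of_forall_le
  intro u hu
  rw [aeval_monomial]
  refine (Polynomial.natDegree_mul_le).trans ?_
  have h1 : ((algebraMap R (Polynomial R)) (coeff u q)).natDegree = 0 := Polynomial.natDegree_C _
  rw [h1, zero_add, Finsupp.prod]
  refine (Polynomial.natDegree_prod_le _ _).trans ?_
  refine le_trans ?_ (le_totalDegree hu)
  rw [Finsupp.sum]
  apply Finset.sum_le_sum
  intro i _
  calc (Polynomial.X ^ u i : Polynomial R).natDegree
      ≤ u i * (Polynomial.X : Polynomial R).natDegree := Polynomial.natDegree_pow_le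
    _ ≤ u i := by rw [Polynomial.natDegree_X, mul_one]

lemma eval_toUni {V R : Type*} [CommRing R] (q : MvPolynomial V R) (r : R) :
    (toUni q).eval r = eval (fun _ => r) q := by
  unfold toUni
  have h : (Polynomial.aeval r : Polynomial R →ₐ[R] R)
        (MvPolynomial.aeval (fun _ : V => Polynomial.X) q)
      = MvPolynomial.aeval
        (fun _ : V => (Polynomial.aeval r : Polynomial R →ₐ[R] R) Polynomial.X) q :=
    comp_aeval_apply _ _ _
  simp only [Polynomial.aeval_X] at h
  rw [← Polynomial.coe_aeval_eq_eval, h, ← eval_eq_aeval']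

lemma evalSubst_single_of_vars {V R : Type*} [CommRing R] [DecidableEq V]
    {q : MvPolynomial V R} {x : V} (h : (↑q.vars : Set V) ⊆ {x}) (r : R) :
    evalSubst q (single x r) = eval (fun _ => r) q := by
  unfold evalSubst
  refine eval₂Hom_congr' rfl ?_ rfl
  intro i hi _
  have hix : i = x := h hi
  subst hix
  simp [single]

lemma ncard_succ_sum {α : Type*} [Fintype α] {n : ℕ} (P : (Fin (n + 1) → α) → Prop) :
    {rs | P rs}.ncard = ∑ r0 : α, {ts : Fin n → α | P (Fin.cons r0 ts)}.ncard := by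
  classical
  have key : ∀ {m : ℕ} (Q : (Fin m → α) → Prop),
      {rs | Q rs}.ncard = Fintype.card {rs // Q rs} := by
    intro m Q
    rw [← Nat.card_coe_set_eq, Nat.card_eq_fintype_card]
    rfl
  rw [key]
  have e : {rs // P rs} ≃ Σ r0 : α, {ts : Fin n → α // P (Fin.cons r0 ts)} :=
    ((Equiv.subtypeEquiv (Fin.consEquiv fun _ => α) (fun q => Iff.rfl)).symm.trans
      (Equiv.subtypeProdEquivSigmaSubtype fun r0 (ts : Fin n → α) => P (Fin.cons r0 ts)))
  rw [Fintype.card_congr e, Fintype.card_sigma]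
  exact Finset.sum_congr rfl fun r0 _ => (key _).symm

lemma ncard_le_pow {α : Type*} [Fintype α] {n : ℕ} (P : (Fin n → α) → Prop) :
    {ts | P ts}.ncard ≤ Fintype.card α ^ n := by
  classical
  refine le_trans (Set.ncard_le_ncard (Set.subset_univ _) (Set.finite_univ)) ?_
  rw [Set.ncard_univ, Nat.card_eq_fintype_card]
  simp

theorem sumcheck_soundness {V F : Type*} [Field F] [Fintype F] [DecidableEq V]
    {S : Type*} (pr : Prover V F S) (s : S)
    (H : Finset F) (p : MvPolynomial V F) (v : F) (d : ℕ) (vs : List V) (r : F)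
    (hvars : (↑p.vars : Set V) ⊆ ↑vs.toFinset)
    (hnodup : vs.Nodup)
    (hdeg : p.totalDegree ≤ d)
    (hH : H.Nonempty) :
    ({rs : Fin vs.length → F |
        sumcheck pr s H p v r (vs.zip (List.ofFn rs)) ∧
        v ≠ ∑ f : (↥vs.toFinset → ↥H), evalSubst p (toSubst vs.toFinset H f)}.ncard : ℝ)
      / (Fintype.card F : ℝ) ^ vs.length
      ≤ (d * vs.length : ℝ) / (Fintype.card F : ℝ) := by
  classical
  induction vs generalizing p v s r with
  | nil =>
    have hempty : {rs : Fin ([] : List V).length → F |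
        sumcheck pr s H p v r (([] : List V).zip (List.ofFn rs)) ∧
        v ≠ ∑ f : (↥([] : List V).toFinset → ↥H),
          evalSubst p (toSubst ([] : List V).toFinset H f)} = ∅ := by
      ext rs
      simp only [Set.mem_setOf_eq, Set.mem_empty_iff_false, iff_false, not_and]
      intro hsc
      haveI : IsEmpty ↥(([] : List V).toFinset) :=
        ⟨fun y => List.not_mem_nil (List.mem_toFinset.mp y.2)⟩
      rw [Fintype.sum_unique]
      have h2 : toSubst ([] : List V).toFinset H default = fun _ => none := by
        funext y
        unfold toSubst
        rw [dif_neg (by simp)]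
      rw [h2]
      have : sumcheck pr s H p v r ([] : List (V × F)) := hsc
      rw [sumcheck] at this
      simp [this]
    rw [hempty]
    simp
  | cons x rest ih =>
    obtain ⟨hx, hnd⟩ := List.nodup_cons.mp hnodup
    have hxr : x ∉ rest.toFinset := fun h => hx (List.mem_toFinset.mp h)
    set n := rest.length with hn
    set qq := (pr (H, p, v) x rest r s).1 with hqq
    set s' := (pr (H, p, v) x rest r s).2 with hs'
    have hW : ∀ y : V, y ∈ (x :: rest).toFinset ↔ y = x ∨ y ∈ rest.toFinset := by
      intro y; simp [List.toFinset_cons]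
    have hxW : x ∈ (x :: rest).toFinset := (hW x).mpr (Or.inl rfl)
    have hmapfst : ∀ ts : Fin n → F, (rest.zip (List.ofFn ts)).map Prod.fst = rest :=
      fun ts => List.map_fst_zip (by simp [n])
    have hsc : ∀ rs : Fin (n + 1) → F,
        sumcheck pr s H p v r ((x :: rest).zip (List.ofFn rs)) ↔
        ((↑qq.vars : Set V) ⊆ {x} ∧ qq.totalDegree ≤ p.totalDegree ∧
          v = ∑ h ∈ H, evalSubst qq (single x h) ∧
          sumcheck pr s' H (inst p (single x (rs 0))) (evalSubst qq (single x (rs 0))) (rs 0)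
            (rest.zip (List.ofFn (Fin.tail rs)))) := by
      intro rs
      have hofn : List.ofFn rs = rs 0 :: List.ofFn (Fin.tail rs) := List.ofFn_succ
      rw [hofn, List.zip_cons_cons]
      simp only [sumcheck, hmapfst (Fin.tail rs), ← hqq, ← hs']
    set trueSum := ∑ f : (↥(x :: rest).toFinset → ↥H),
        evalSubst p (toSubst (x :: rest).toFinset H f) with hts
    by_cases hv : v = trueSum
    · have hempty : {rs : Fin (x :: rest).length → F |
          sumcheck pr s H p v r ((x :: rest).zip (List.ofFn rs)) ∧ v ≠ trueSum} = ∅ := by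
        ext rs
        simp only [Set.mem_setOf_eq, Set.mem_empty_iff_false, iff_false, not_and]
        exact fun _ => not_not.mpr hv
      rw [hempty]
      simp only [Set.ncard_empty, Nat.cast_zero, zero_div]
      positivity
    by_cases hABC : (↑qq.vars : Set V) ⊆ {x} ∧ qq.totalDegree ≤ p.totalDegree ∧
        v = ∑ h ∈ H, evalSubst qq (single x h)
    case neg =>
      have hempty : {rs : Fin (x :: rest).length → F |
          sumcheck pr s H p v r ((x :: rest).zip (List.ofFn rs)) ∧ v ≠ trueSum} = ∅ := by
        ext rs
        simp only [Set.mem_setOf_eq, Set.mem_empty_iff_false, iff_false, not_and]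
        intro hsum
        exfalso
        obtain ⟨h1, h2, h3, -⟩ := (hsc rs).mp hsum
        exact hABC ⟨h1, h2, h3⟩
      rw [hempty]
      simp only [Set.ncard_empty, Nat.cast_zero, zero_div]
      positivity
    obtain ⟨hA, hB, hC⟩ := hABC
    -- the honest univariate answer
    set ss := ∑ f : (↥rest.toFinset → ↥H), inst p (toSubst rest.toFinset H f) with hss
    have hvars' : ∀ y ∈ p.vars, y = x ∨ y ∈ rest.toFinset := by
      intro y hy
      exact (hW y).mp (by exact_mod_cast hvars (Finset.mem_coe.mpr hy))
    have hssvars : (↑ss.vars : Set V) ⊆ {x} := by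
      intro y hy
      have hy' : y ∈ ss.vars := hy
      rw [hss] at hy'
      have h1 := vars_sum_subset Finset.univ
        (fun f : (↥rest.toFinset → ↥H) => inst p (toSubst rest.toFinset H f)) hy'
      rw [Finset.mem_biUnion] at h1
      obtain ⟨f, -, h2⟩ := h1
      obtain ⟨h3, h4⟩ := vars_inst p _ y h2
      have h5 : y ∉ rest.toFinset := by
        intro hc
        unfold toSubst at h4
        rw [dif_pos hc] at h4
        exact Option.some_ne_none _ h4
      rcases hvars' y h3 with h | h
      · exact h ▸ rfl
      · exact absurd h h5
    have hssdeg : ss.totalDegree ≤ d := by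
      rw [hss]
      exact totalDegree_finsetSum_le fun f _ => (totalDegree_inst p _).trans hdeg
    have hevalss : ∀ σ : V → Option F, evalSubst ss σ =
        ∑ f : (↥rest.toFinset → ↥H), evalSubst p (override σ (toSubst rest.toFinset H f)) := by
      intro σ
      rw [hss]
      unfold evalSubst
      rw [map_sum]
      exact Finset.sum_congr rfl fun f _ => evalSubst_inst p _ σ
    have F3 : trueSum = ∑ h ∈ H, evalSubst ss (single x h) := by
      have hrhs : ∑ h ∈ H, evalSubst ss (single x h)
          = ∑ hf : ↥H × (↥rest.toFinset → ↥H),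
              evalSubst p (override (single x ↑hf.1) (toSubst rest.toFinset H hf.2)) := by
        rw [← Finset.sum_coe_sort H (fun h => evalSubst ss (single x h))]
        rw [Fintype.sum_prod_type]
        exact Finset.sum_congr rfl fun h _ => hevalss (single x ↑h)
      rw [hrhs, hts]
      refine (Fintype.sum_bijective (fun hf : ↥H × (↥rest.toFinset → ↥H) =>
        (fun y : ↥(x :: rest).toFinset =>
          if hy : (y : V) ∈ rest.toFinset then hf.2 ⟨y, hy⟩ else hf.1))
        ⟨?_, ?_⟩ _ _ ?_).symm
      · rintro ⟨h1, f1⟩ ⟨h2, f2⟩ heq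
        have e1 : h1 = h2 := by
          have h := congrFun heq ⟨x, hxW⟩
          simpa only [dif_neg hxr] using h
        have e2 : f1 = f2 := by
          funext z
          have hz : (z : V) ∈ (x :: rest).toFinset := (hW z).mpr (Or.inr z.2)
          have h := congrFun heq ⟨z, hz⟩
          simpa only [dif_pos z.2, Subtype.coe_eta] using h
        rw [Prod.ext_iff]; exact ⟨e1, e2⟩
      · intro g
        refine ⟨(g ⟨x, hxW⟩, fun z => g ⟨z, (hW z).mpr (Or.inr z.2)⟩), ?_⟩
        funext y
        by_cases hy : (y : V) ∈ rest.toFinset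
        · simp only [dif_pos hy, Subtype.coe_eta]
        · have hyx : (y : V) = x := ((hW y).mp y.2).resolve_right hy
          simp only [dif_neg hy]
          congr 1
          exact Subtype.ext hyx.symm
      · intro hf
        congr 1
        funext y
        unfold toSubst override single
        by_cases h1 : y ∈ rest.toFinset
        · have h2 : y ∈ (x :: rest).toFinset := (hW y).mpr (Or.inr h1)
          simp [h1, h2]
        · by_cases h2 : y = x
          · subst h2
            simp [h1, hxW]
          · have h3 : y ∉ (x :: rest).toFinset := fun hc => ((hW y).mp hc).elim h2 h1
            simp [h1, h2, h3]
    have F4 : ∀ r0 : F, (∑ f : (↥rest.toFinset → ↥H),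
        evalSubst (inst p (single x r0)) (toSubst rest.toFinset H f))
        = evalSubst ss (single x r0) := by
      intro r0
      rw [hevalss (single x r0)]
      refine Finset.sum_congr rfl fun f _ => ?_
      rw [evalSubst_inst]
      congr 1
      funext y
      unfold override single toSubst
      by_cases h1 : y ∈ rest.toFinset
      · have h2 : y ≠ x := fun e => hxr (e ▸ h1)
        simp [h1, h2]
      · by_cases h2 : y = x
        · simp [h1, h2, hx]
        · simp [h1, h2]
    -- the difference polynomial and its roots
    set Dp := qq - ss with hDp
    set Q := toUni Dp with hQ
    have hDvars : (↑Dp.vars : Set V) ⊆ {x} := by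
      intro y hy
      have hy' : y ∈ Dp.vars := hy
      rw [hDp] at hy'
      have := vars_sub_subset (p := qq) (q := ss) hy'
      rw [Finset.mem_union] at this
      rcases this with h | h
      · exact hA h
      · exact hssvars h
    have hQdeg : Q.natDegree ≤ d := by
      rw [hQ]
      refine (natDegree_toUni _).trans ?_
      rw [hDp]
      exact le_trans (totalDegree_sub _ _) (max_le (hB.trans hdeg) hssdeg)
    have hQeval : ∀ r0 : F,
        Q.eval r0 = evalSubst qq (single x r0) - evalSubst ss (single x r0) := by
      intro r0
      rw [hQ, eval_toUni, ← evalSubst_single_of_vars hDvars r0, hDp]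
      unfold evalSubst
      rw [map_sub]
    have hQne : Q ≠ 0 := by
      intro h0
      apply hv
      rw [hC, F3]
      refine Finset.sum_congr rfl fun h _ => ?_
      have he := hQeval h
      rw [h0, Polynomial.eval_zero] at he
      exact sub_eq_zero.mp he.symm
    -- counting
    have hfpos : (0 : ℝ) < (Fintype.card F : ℝ) := by
      exact_mod_cast Fintype.card_pos
    have hcount := ncard_succ_sum (α := F) (n := n)
      (fun rs => sumcheck pr s H p v r ((x :: rest).zip (List.ofFn rs)) ∧ v ≠ trueSum)
    show ({rs : Fin (n + 1) → F |
        sumcheck pr s H p v r ((x :: rest).zip (List.ofFn rs)) ∧ v ≠ trueSum}.ncard : ℝ)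
        / (Fintype.card F : ℝ) ^ (n + 1)
        ≤ (d * (n + 1 : ℕ) : ℝ) / (Fintype.card F : ℝ)
    rw [hcount]
    have hfiber : ∀ r0 : F,
        (({ts : Fin n → F | sumcheck pr s H p v r
            ((x :: rest).zip (List.ofFn (Fin.cons r0 ts))) ∧ v ≠ trueSum}).ncard : ℝ)
        ≤ if Q.eval r0 = 0 then ((Fintype.card F : ℝ)) ^ n
          else (d * n / (Fintype.card F : ℝ)) * (Fintype.card F : ℝ) ^ n := by
      intro r0
      by_cases hr : Q.eval r0 = 0
      · rw [if_pos hr]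
        exact_mod_cast Nat.cast_le.mpr (ncard_le_pow _)
      · rw [if_neg hr]
        have hsub : {ts : Fin n → F | sumcheck pr s H p v r
              ((x :: rest).zip (List.ofFn (Fin.cons r0 ts))) ∧ v ≠ trueSum}
            ⊆ {ts : Fin n → F |
              sumcheck pr s' H (inst p (single x r0)) (evalSubst qq (single x r0)) r0
                (rest.zip (List.ofFn ts)) ∧
              evalSubst qq (single x r0) ≠ ∑ f : (↥rest.toFinset → ↥H),
                evalSubst (inst p (single x r0)) (toSubst rest.toFinset H f)} := by
          intro ts hts'
          obtain ⟨hsum, -⟩ := hts'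
          obtain ⟨-, -, -, hD⟩ := (hsc (Fin.cons r0 ts)).mp hsum
          rw [Fin.cons_zero, Fin.tail_cons] at hD
          refine ⟨hD, ?_⟩
          rw [F4 r0]
          intro hcontr
          exact hr (by rw [hQeval r0, hcontr, sub_self])
        have hvarsi : (↑(inst p (single x r0)).vars : Set V) ⊆ ↑rest.toFinset := by
          intro y hy
          obtain ⟨h1, h2⟩ := vars_inst p _ y hy
          rcases hvars' y h1 with h | h
          · exfalso
            unfold single at h2
            rw [if_pos h] at h2
            exact Option.some_ne_none _ h2
          · exact h
        have hIH := ih s' (inst p (single x r0)) (evalSubst qq (single x r0)) r0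
          hvarsi hnd ((totalDegree_inst p _).trans hdeg)
        have h1 : ({ts : Fin n → F | sumcheck pr s H p v r
              ((x :: rest).zip (List.ofFn (Fin.cons r0 ts))) ∧ v ≠ trueSum}.ncard : ℝ)
            ≤ (({ts : Fin n → F |
              sumcheck pr s' H (inst p (single x r0)) (evalSubst qq (single x r0)) r0
                (rest.zip (List.ofFn ts)) ∧
              evalSubst qq (single x r0) ≠ ∑ f : (↥rest.toFinset → ↥H),
                evalSubst (inst p (single x r0)) (toSubst rest.toFinset H f)}).ncard : ℝ) :=
          Nat.cast_le.mpr (Set.ncard_le_ncard hsub (Set.toFinite _))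
        refine h1.trans ?_
        rw [← div_le_iff₀ (by positivity)] at *
        exact le_trans (by rw [div_le_iff₀ (by positivity)] at hIH ⊢; exact hIH) le_rfl
    -- summing
    have hroots : (Finset.univ.filter (fun r0 : F => Q.eval r0 = 0)).card ≤ d := by
      have hsub : (Finset.univ.filter (fun r0 : F => Q.eval r0 = 0)) ⊆ Q.roots.toFinset := by
        intro r0 hr0
        rw [Multiset.mem_toFinset, Polynomial.mem_roots hQne]
        exact (Finset.mem_filter.mp hr0).2
      calc (Finset.univ.filter (fun r0 : F => Q.eval r0 = 0)).card
          ≤ Q.roots.toFinset.card := Finset.card_le_card hsub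
        _ ≤ Multiset.card Q.roots := Multiset.toFinset_card_le _
        _ ≤ Q.natDegree := Polynomial.card_roots' Q
        _ ≤ d := hQdeg
    have hsum_bound : ((∑ r0 : F, {ts : Fin n → F | sumcheck pr s H p v r
          ((x :: rest).zip (List.ofFn (Fin.cons r0 ts))) ∧ v ≠ trueSum}.ncard : ℕ) : ℝ)
        ≤ (d : ℝ) * (Fintype.card F : ℝ) ^ n
          + (d : ℝ) * n * (Fintype.card F : ℝ) ^ n := by
      push_cast
      calc (∑ r0 : F, ({ts : Fin n → F | sumcheck pr s H p v r
              ((x :: rest).zip (List.ofFn (Fin.cons r0 ts))) ∧ v ≠ trueSum}.ncard : ℝ))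
          ≤ ∑ r0 : F, (if Q.eval r0 = 0 then ((Fintype.card F : ℝ)) ^ n
              else (d * n / (Fintype.card F : ℝ)) * (Fintype.card F : ℝ) ^ n) :=
            Finset.sum_le_sum fun r0 _ => hfiber r0
        _ = (Finset.univ.filter (fun r0 : F => Q.eval r0 = 0)).card
              * (Fintype.card F : ℝ) ^ n
            + (Finset.univ.filter (fun r0 : F => ¬ Q.eval r0 = 0)).card
              * ((d * n / (Fintype.card F : ℝ)) * (Fintype.card F : ℝ) ^ n) := by
            rw [Finset.sum_ite, Finset.sum_const, Finset.sum_const, nsmul_eq_mul, nsmul_eq_mul]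
        _ ≤ (d : ℝ) * (Fintype.card F : ℝ) ^ n
            + (Fintype.card F : ℝ)
              * ((d * n / (Fintype.card F : ℝ)) * (Fintype.card F : ℝ) ^ n) := by
            have hb1 : ((Finset.univ.filter (fun r0 : F => Q.eval r0 = 0)).card : ℝ) ≤ d := by
              exact_mod_cast hroots
            have hb2 : ((Finset.univ.filter (fun r0 : F => ¬ Q.eval r0 = 0)).card : ℝ)
                ≤ (Fintype.card F : ℝ) := by
              exact_mod_cast Finset.card_le_card (Finset.filter_subset _ _) |>.trans
                (by simp : Finset.univ.card ≤ Fintype.card F)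
            have hnn1 : (0:ℝ) ≤ (Fintype.card F : ℝ) ^ n := by positivity
            have hnn2 : (0:ℝ) ≤ (d * n / (Fintype.card F : ℝ)) * (Fintype.card F : ℝ) ^ n := by
              positivity
            exact add_le_add (mul_le_mul_of_nonneg_right hb1 hnn1)
              (mul_le_mul_of_nonneg_right hb2 hnn2)
        _ = (d : ℝ) * (Fintype.card F : ℝ) ^ n
            + (d : ℝ) * n * (Fintype.card F : ℝ) ^ n := by
            field_simp
    rw [div_le_div_iff₀ (by positivity) hfpos]
    calc ((∑ r0 : F, {ts : Fin n → F | sumcheck pr s H p v r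
            ((x :: rest).zip (List.ofFn (Fin.cons r0 ts))) ∧ v ≠ trueSum}.ncard : ℕ) : ℝ)
          * (Fintype.card F : ℝ)
        ≤ ((d : ℝ) * (Fintype.card F : ℝ) ^ n + (d : ℝ) * n * (Fintype.card F : ℝ) ^ n)
          * (Fintype.card F : ℝ) :=
          mul_le_mul_of_nonneg_right hsum_bound hfpos.le
      _ = (d * (n + 1 : ℕ) : ℝ) * (Fintype.card F : ℝ) ^ (n + 1) := by
          push_cast
          ring
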